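/- Any d×d matrix over a unital ring R with trace zero is a sum of commutators in M_d(R). -/

import Mathlib

/-- Any `d × d` matrix over a unital ring `R` with trace zero is a sum of
commutators in `M_d(R)`. -/
theorem stmt_2 (R : Type*) [Ring R] (d : ℕ) (A : Matrix (Fin d) (Fin d) R)
    (hA : A.trace = 0) :
    A ∈ AddSubgroup.closure
      {Z : Matrix (Fin d) (Fin d) R | ∃ X Y, Z = X * Y - Y * X} := by
  set S := AddSubgroup.closure
      {Z : Matrix (Fin d) (Fin d) R | ∃ X Y, Z = X * Y - Y * X} with hS
  have hcomm : ∀ X Y : Matrix (Fin d) (Fin d) R, X * Y - Y * X ∈ S :=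
    fun X Y => AddSubgroup.subset_closure ⟨X, Y, rfl⟩
  obtain _ | n := d
  · have hA0 : A = 0 := Subsingleton.elim _ _
    simpa [hA0] using S.zero_mem
  have key : ∀ (i j : Fin (n + 1)) (a : R), i ≠ j → Matrix.single i j a ∈ S := by
    intro i j a hij
    have := hcomm (Matrix.single i i a) (Matrix.single i j 1)
    rwa [Matrix.single_mul_single_same, Matrix.single_mul_single_of_ne (h := Ne.symm hij),
      mul_one, sub_zero] at this
  have key2 : ∀ (i j : Fin (n + 1)) (a : R), i ≠ j →
      Matrix.single i i a - Matrix.single j j a ∈ S := by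
    intro i j a hij
    have := hcomm (Matrix.single i j a) (Matrix.single j i 1)
    rwa [Matrix.single_mul_single_same, Matrix.single_mul_single_same,
      mul_one, one_mul] at this
  have h00 : Matrix.single (0 : Fin (n + 1)) (0 : Fin (n + 1)) A.trace
      = ∑ i, Matrix.single (0 : Fin (n + 1)) (0 : Fin (n + 1)) (A i i) := by
    unfold Matrix.trace
    induction (Finset.univ : Finset (Fin (n + 1))) using Finset.induction with
    | empty => simp
    | insert h ih => simp_all [Matrix.single_add]
  have hrw : A = ∑ i, ∑ j,
      (Matrix.single i j (A i j)
        - if i = j then Matrix.single (0 : Fin (n + 1)) 0 (A i i) else 0) := by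
    have := Matrix.matrix_eq_sum_single A
    simp only [Finset.sum_sub_distrib, Finset.sum_ite_eq, Finset.mem_univ, if_true]
    rw [← this]
    have h0 : ∑ x : Fin (n + 1), Matrix.single (0 : Fin (n + 1)) (0 : Fin (n + 1)) (A x x) = 0 := by
      rw [← h00, hA]; simp
    rw [h0, sub_zero]
  rw [hrw]
  refine AddSubgroup.sum_mem S fun i _ => AddSubgroup.sum_mem S fun j _ => ?_
  by_cases hij : i = j
  · subst hij
    simp only [if_true]
    by_cases hi0 : i = 0
    · subst hi0; simpa using S.zero_mem
    · exact key2 i 0 (A i i) hi0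
  · simpa [hij] using key i j (A i j) hij
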